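/- Every 3-dimensional real Lie subalgebra of u(2) equals su(2), the subalgebra of traceless skew-Hermitian 2×2 matrices. -/

import Mathlib

open Matrix Complex

/-- A traceless skew-Hermitian 2×2 complex matrix has an explicit form. -/
lemma skew_form (X : Matrix (Fin 2) (Fin 2) ℂ) (h1 : Xᴴ = -X) (h2 : X.trace = 0) :
    X = !![(⟨0, (X 0 0).im⟩ : ℂ), ⟨(X 0 1).re, (X 0 1).im⟩;
           ⟨-(X 0 1).re, (X 0 1).im⟩, ⟨0, -(X 0 0).im⟩] := by
  have h00 : star (X 0 0) = -(X 0 0) := by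
    have := congrFun (congrFun h1 0) 0; simpa [conjTranspose_apply] using this
  have h10 : star (X 0 1) = -(X 1 0) := by
    have := congrFun (congrFun h1 1) 0; simpa [conjTranspose_apply] using this
  have h11 : X 1 1 = -(X 0 0) := by
    have : X 0 0 + X 1 1 = 0 := by simpa [trace, Fin.sum_univ_two] using h2
    linear_combination this
  have hre : (X 0 0).re = 0 := by
    have := congrArg Complex.re h00; simp at this; linarith
  have hr : (X 1 0).re = -(X 0 1).re := by
    have := congrArg Complex.re h10; simp at this; linarith
  have hi : (X 1 0).im = (X 0 1).im := by
    have := congrArg Complex.im h10; simp at this; linarith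
  ext i j
  fin_cases i <;> fin_cases j <;> simp [Complex.ext_iff, hre, h11, hr, hi]

lemma trace_sq_zero (C : Matrix (Fin 2) (Fin 2) ℂ) (h : (C * Cᴴ).trace = 0) : C = 0 := by
  have h' := congrArg Complex.re h
  simp [trace, mul_apply, Fin.sum_univ_two, diag, conjTranspose_apply, Complex.mul_conj] at h'
  have n0 := Complex.normSq_nonneg (C 0 0)
  have n1 := Complex.normSq_nonneg (C 0 1)
  have n2 := Complex.normSq_nonneg (C 1 0)
  have n3 := Complex.normSq_nonneg (C 1 1)
  ext i j
  fin_cases i <;> fin_cases j <;> simp <;>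
    (apply Complex.normSq_eq_zero.mp; nlinarith)

noncomputable def su2 : Submodule ℝ (Matrix (Fin 2) (Fin 2) ℂ) where
  carrier := {X | Xᴴ = -X ∧ X.trace = 0}
  add_mem' := by
    rintro a b ⟨ha1, ha2⟩ ⟨hb1, hb2⟩
    exact ⟨by simp [conjTranspose_add, ha1, hb1]; abel, by simp [ha2, hb2]⟩
  zero_mem' := by simp
  smul_mem' := by
    rintro r a ⟨ha1, ha2⟩
    refine ⟨?_, by simp [ha2]⟩
    rw [conjTranspose_smul, ha1]
    simp

noncomputable def mk3 (v : Fin 3 → ℝ) : Matrix (Fin 2) (Fin 2) ℂ :=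
  !![(⟨0, v 0⟩ : ℂ), ⟨v 1, v 2⟩; ⟨-v 1, v 2⟩, ⟨0, -(v 0)⟩]

lemma mk3_mem (v : Fin 3 → ℝ) : mk3 v ∈ su2 := by
  constructor
  · ext i j; fin_cases i <;> fin_cases j <;>
      simp [mk3, conjTranspose_apply, Complex.ext_iff]
  · simp [mk3, trace, Fin.sum_univ_two, Complex.ext_iff]

noncomputable def su2Equiv : su2 ≃ₗ[ℝ] (Fin 3 → ℝ) where
  toFun X := ![(X.1 0 0).im, (X.1 0 1).re, (X.1 0 1).im]
  invFun v := ⟨mk3 v, mk3_mem v⟩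
  map_add' X Y := by ext i; fin_cases i <;> simp
  map_smul' r X := by ext i; fin_cases i <;> simp
  left_inv X := by
    apply Subtype.ext
    exact (skew_form X.1 X.2.1 X.2.2).symm
  right_inv v := by ext i; fin_cases i <;> simp [mk3]

lemma finrank_su2 : Module.finrank ℝ su2 = 3 := by
  rw [su2Equiv.finrank_eq]; simp

lemma mk3_minors (a b c a' b' c' : ℝ)
    (h : mk3 ![a,b,c] * mk3 ![a',b',c'] = mk3 ![a',b',c'] * mk3 ![a,b,c]) :
    a*b' = a'*b ∧ a*c' = a'*c ∧ b*c' = b'*c := by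
  have h00 := congrFun (congrFun h 0) 0
  have h01 := congrFun (congrFun h 0) 1
  simp [mk3, mul_apply, Fin.sum_univ_two, Complex.ext_iff] at h00 h01
  exact ⟨by nlinarith [h00.1, h00.2, h01.1, h01.2],
         by nlinarith [h00.1, h00.2, h01.1, h01.2],
         by nlinarith [h00.1, h00.2, h01.1, h01.2]⟩

lemma cross_dep (a b c a' b' c' : ℝ) (h1 : a*b' = a'*b) (h2 : a*c' = a'*c)
    (h3 : b*c' = b'*c) (hne : ¬(a = 0 ∧ b = 0 ∧ c = 0)) :
    ∃ t : ℝ, a' = t*a ∧ b' = t*b ∧ c' = t*c := by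
  by_cases ha : a = 0
  · by_cases hb : b = 0
    · have hc : c ≠ 0 := by tauto
      have ha' : a' = 0 := by
        rcases mul_eq_zero.mp (by rw [ha] at h2; linarith : a'*c = 0) with h | h
        exacts [h, absurd h hc]
      have hb' : b' = 0 := by
        rcases mul_eq_zero.mp (by rw [hb] at h3; linarith : b'*c = 0) with h | h
        exacts [h, absurd h hc]
      exact ⟨c'/c, by simp [ha, ha'], by simp [hb, hb'], by field_simp⟩
    · refine ⟨b'/b, ?_, by field_simp, ?_⟩
      · field_simp; nlinarith
      · field_simp; nlinarith
  · refine ⟨a'/a, by field_simp, ?_, ?_⟩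
    · field_simp; nlinarith
    · field_simp; nlinarith

lemma mk3_smul (t : ℝ) (v : Fin 3 → ℝ) : mk3 (t • v) = t • mk3 v := by
  ext i j
  fin_cases i <;> fin_cases j <;>
    simp [mk3, Complex.ext_iff, Complex.real_smul]

set_option synthInstance.maxHeartbeats 1000000 in
set_option maxHeartbeats 1600000 in
/-- Every 3-dimensional real Lie subalgebra of `u(2)` (a submodule of
skew-Hermitian `2×2` complex matrices closed under the commutator bracket)
equals `su(2)`, the traceless skew-Hermitian matrices. -/
theorem three_dim_subalgebra_of_u2_eq_su2
    (L : Submodule ℝ (Matrix (Fin 2) (Fin 2) ℂ))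
    (hskew : ∀ X ∈ L, Xᴴ = -X)
    (hbracket : ∀ X ∈ L, ∀ Y ∈ L, ⁅X, Y⁆ ∈ L)
    (hdim : Module.finrank ℝ L = 3) :
    ∀ X : Matrix (Fin 2) (Fin 2) ℂ, X ∈ L ↔ (Xᴴ = -X ∧ X.trace = 0) := by
  -- real part of trace vanishes on L
  have hre : ∀ X ∈ L, (X.trace).re = 0 := by
    intro X hX
    have : star X.trace = -X.trace := by
      rw [← trace_conjTranspose, hskew X hX, trace_neg]
    have := congrArg Complex.re this
    simp at this; linarith
  -- key claim: trace vanishes on L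
  have htr : ∀ X ∈ L, X.trace = 0 := by
    by_contra hcon
    push_neg at hcon
    obtain ⟨Z, hZL, hZt⟩ := hcon
    -- the imaginary-part-of-trace functional
    set f : L →ₗ[ℝ] ℝ :=
      { toFun := fun X => (Matrix.trace X.1).im
        map_add' := fun X Y => by simp
        map_smul' := fun r X => by simp } with hf_def
    have hfZ : f ⟨Z, hZL⟩ ≠ 0 := by
      simp only [hf_def, LinearMap.coe_mk, AddHom.coe_mk]
      intro h
      exact hZt (Complex.ext (hre Z hZL) h)
    -- rank-nullity
    have hrange : LinearMap.range f = ⊤ := by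
      rw [LinearMap.range_eq_top]
      intro y
      refine ⟨(y / f ⟨Z, hZL⟩) • ⟨Z, hZL⟩, ?_⟩
      rw [_root_.map_smul]
      rw [smul_eq_mul]; exact div_mul_cancel₀ y hfZ
    have hker : Module.finrank ℝ (LinearMap.ker f) = 2 := by
      have h1 := LinearMap.finrank_range_add_finrank_ker f
      rw [hdim, hrange, finrank_top] at h1
      simp [Module.finrank_self] at h1
      omega
    -- get a basis of the kernel
    haveI : Module.Free ℝ (LinearMap.ker f) := by exact Module.Free.of_divisionRing ℝ ↥(LinearMap.ker f)
    have b := Module.finBasisOfFinrankEq ℝ (LinearMap.ker f) hker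
    set X : Matrix (Fin 2) (Fin 2) ℂ := ((b 0 : L) : Matrix (Fin 2) (Fin 2) ℂ) with hX_def
    set Y : Matrix (Fin 2) (Fin 2) ℂ := ((b 1 : L) : Matrix (Fin 2) (Fin 2) ℂ) with hY_def
    have hXL : X ∈ L := (b 0 : L).2
    have hYL : Y ∈ L := (b 1 : L).2
    have hXt : X.trace = 0 := by
      have him : (X.trace).im = 0 := (b 0).2
      exact Complex.ext (hre X hXL) him
    have hYt : Y.trace = 0 := by
      have him : (Y.trace).im = 0 := (b 1).2
      exact Complex.ext (hre Y hYL) him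
    have hXs : Xᴴ = -X := hskew X hXL
    have hYs : Yᴴ = -Y := hskew Y hYL
    -- the commutator lies in the kernel
    set C : Matrix (Fin 2) (Fin 2) ℂ := X * Y - Y * X with hC_def
    have hCL : C ∈ L := by
      have h := hbracket X hXL Y hYL
      rw [Ring.lie_def] at h
      rw [hC_def]
      exact h
    have hCt : C.trace = 0 := by
      rw [hC_def, trace_sub, trace_mul_comm, sub_self]
    -- express C in terms of the basis
    set cC : LinearMap.ker f := ⟨⟨C, hCL⟩, by
      simp only [LinearMap.mem_ker, hf_def, LinearMap.coe_mk, AddHom.coe_mk, hCt,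
        Complex.zero_im]⟩ with hcC_def
    set s : ℝ := b.repr cC 0 with hs_def
    set t : ℝ := b.repr cC 1 with ht_def
    have hsum : C = s • X + t • Y := by
      have h := b.sum_repr cC
      rw [Fin.sum_univ_two] at h
      have h2 := congrArg (fun z : LinearMap.ker f =>
        ((z : L) : Matrix (Fin 2) (Fin 2) ℂ)) h
      simpa using h2.symm
    -- orthogonality of the commutator with X and Y
    have oX : (C * Xᴴ).trace = 0 := by
      rw [hXs, hC_def, sub_mul, mul_neg, mul_neg, trace_sub, trace_neg, trace_neg,
        mul_assoc X Y X, trace_mul_comm X (Y * X)]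
      ring
    have oY : (C * Yᴴ).trace = 0 := by
      rw [hYs, hC_def, sub_mul, mul_neg, mul_neg, trace_sub, trace_neg, trace_neg,
        mul_assoc Y X Y, trace_mul_comm Y (X * Y)]
      ring
    -- hence the commutator vanishes
    have hC0 : C = 0 := by
      apply trace_sq_zero
      have : Cᴴ = s • Xᴴ + t • Yᴴ := by
        rw [hsum]; simp [conjTranspose_add, conjTranspose_smul]
      rw [this, mul_add, trace_add, mul_smul_comm, mul_smul_comm, trace_smul, trace_smul,
        oX, oY]
      simp
    have hcomm : X * Y = Y * X := by
      have h : X * Y - Y * X = 0 := by rw [← hC_def]; exact hC0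
      exact sub_eq_zero.mp h
    -- coordinates
    set a1 : ℝ := (X 0 0).im
    set b1 : ℝ := (X 0 1).re
    set c1 : ℝ := (X 0 1).im
    set a2 : ℝ := (Y 0 0).im
    set b2 : ℝ := (Y 0 1).re
    set c2 : ℝ := (Y 0 1).im
    have hXf : X = mk3 ![a1, b1, c1] := by
      have := skew_form X hXs hXt
      rw [this]; simp [mk3]
      exact ⟨⟨rfl, rfl⟩, ⟨rfl, rfl⟩, rfl⟩
    have hYf : Y = mk3 ![a2, b2, c2] := by
      have := skew_form Y hYs hYt
      rw [this]; simp [mk3]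
      exact ⟨⟨rfl, rfl⟩, ⟨rfl, rfl⟩, rfl⟩
    have hminors := mk3_minors a1 b1 c1 a2 b2 c2 (by rw [← hXf, ← hYf]; exact hcomm)
    have hXne : ¬(a1 = 0 ∧ b1 = 0 ∧ c1 = 0) := by
      rintro ⟨h1, h2, h3⟩
      have : X = 0 := by
        rw [hXf, h1, h2, h3]
        ext i j; fin_cases i <;> fin_cases j <;> simp [mk3, Complex.ext_iff]
      exact b.ne_zero 0 (Subtype.ext (Subtype.ext this))
    obtain ⟨u, hu1, hu2, hu3⟩ := cross_dep a1 b1 c1 a2 b2 c2 hminors.1 hminors.2.1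
      hminors.2.2 hXne
    have hYX : Y = u • X := by
      rw [hXf, hYf, ← mk3_smul]
      ext i; fin_cases i <;> simp [hu1, hu2, hu3]
    -- contradicts linear independence of the basis
    have hdep : (b 1 : LinearMap.ker f) = u • b 0 := by
      apply Subtype.ext; apply Subtype.ext
      simpa using hYX
    have hrep := congrArg (fun z => b.repr z 1) hdep
    simp only [_root_.map_smul, Module.Basis.repr_self] at hrep
    rw [Finsupp.smul_apply, Finsupp.single_eq_same, Finsupp.single_apply] at hrep
    simp at hrep
  -- conclude L = su2
  have hle : L ≤ su2 := fun X hX => ⟨hskew X hX, htr X hX⟩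
  have heq : L = su2 := Submodule.eq_of_le_of_finrank_eq hle (by rw [finrank_su2, hdim])
  intro X
  rw [heq]
  exact Iff.rfl
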